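/- Suppose b₁, b₂, b₃ ≥ 0 satisfy b₁ ≤ max{γ₁₂(b₂), γ₁₃(b₃)}, b₂ ≤ max{γ₂₁(b₁), γ₂₃(b₃)}, b₃ ≤ max{γ₃₁(b₁), γ₃₂(b₂)}, where all γ_{ij} are class-K and satisfy the cyclic small-gain conditions γ₁₂∘γ₂₁<id, γ₁₃∘γ₃₁<id, γ₂₃∘γ₃₂<id, γ₁₂∘γ₂₃∘γ₃₁<id, γ₁₃∘γ₃₂∘γ₂₁<id (pointwise for s>0). Then b₁ = b₂ = b₃ = 0. -/

import Mathlib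

open NNReal

def ClassK (γ : ℝ≥0 → ℝ≥0) : Prop := Continuous γ ∧ StrictMono γ ∧ γ 0 = 0

theorem cyclic_smallgain_zero_input_three
    (γ₁₂ γ₁₃ γ₂₁ γ₂₃ γ₃₁ γ₃₂ : ℝ≥0 → ℝ≥0)
    (h₁₂ : ClassK γ₁₂) (h₁₃ : ClassK γ₁₃) (h₂₁ : ClassK γ₂₁)
    (h₂₃ : ClassK γ₂₃) (h₃₁ : ClassK γ₃₁) (h₃₂ : ClassK γ₃₂)
    (hsg₁ : ∀ s : ℝ≥0, 0 < s → γ₁₂ (γ₂₁ s) < s)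
    (hsg₂ : ∀ s : ℝ≥0, 0 < s → γ₁₃ (γ₃₁ s) < s)
    (hsg₃ : ∀ s : ℝ≥0, 0 < s → γ₂₃ (γ₃₂ s) < s)
    (hsg₄ : ∀ s : ℝ≥0, 0 < s → γ₁₂ (γ₂₃ (γ₃₁ s)) < s)
    (hsg₅ : ∀ s : ℝ≥0, 0 < s → γ₁₃ (γ₃₂ (γ₂₁ s)) < s)
    (b₁ b₂ b₃ : ℝ≥0)
    (hb₁ : b₁ ≤ max (γ₁₂ b₂) (γ₁₃ b₃))
    (hb₂ : b₂ ≤ max (γ₂₁ b₁) (γ₂₃ b₃))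
    (hb₃ : b₃ ≤ max (γ₃₁ b₁) (γ₃₂ b₂)) :
    b₁ = 0 ∧ b₂ = 0 ∧ b₃ = 0 := by
  obtain ⟨-, m₁₂, z₁₂⟩ := h₁₂
  obtain ⟨-, m₁₃, z₁₃⟩ := h₁₃
  obtain ⟨-, m₂₁, z₂₁⟩ := h₂₁
  obtain ⟨-, m₂₃, z₂₃⟩ := h₂₃
  obtain ⟨-, m₃₁, z₃₁⟩ := h₃₁
  obtain ⟨-, m₃₂, z₃₂⟩ := h₃₂
  -- γ₃₂ ∘ γ₂₃ < id as well
  have hsg₃' : ∀ s : ℝ≥0, 0 < s → γ₃₂ (γ₂₃ s) < s := by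
    intro s hs
    by_contra h
    push_neg at h
    have hps : 0 < γ₂₃ s := by
      have := m₂₃ hs; rwa [z₂₃] at this
    have := hsg₃ (γ₂₃ s) hps
    exact absurd (m₂₃.monotone h) (not_le.mpr this)
  have hb1 : b₁ = 0 := by
    by_contra h1
    have pb₁ : 0 < b₁ := pos_iff_ne_zero.mpr h1
    rcases le_max_iff.mp hb₁ with h₁₂b | h₁₃b
    · -- b₁ ≤ γ₁₂ b₂
      have pb₂ : 0 < b₂ := by
        rcases eq_or_lt_of_le (zero_le : (0 : ℝ≥0) ≤ b₂) with e | h; · rw [← e, z₁₂] at h₁₂b; simpa using lt_of_lt_of_le pb₁ h₁₂b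
        exact h
      rcases le_max_iff.mp hb₂ with h₂₁b | h₂₃b
      · have : b₁ ≤ γ₁₂ (γ₂₁ b₁) := h₁₂b.trans (m₁₂.monotone h₂₁b)
        exact absurd this (not_le.mpr (hsg₁ b₁ pb₁))
      · have pb₃ : 0 < b₃ := by
          rcases eq_or_lt_of_le (zero_le : (0 : ℝ≥0) ≤ b₃) with e | h; · rw [← e, z₂₃] at h₂₃b; simpa using lt_of_lt_of_le pb₂ h₂₃b
          exact h
        rcases le_max_iff.mp hb₃ with h₃₁b | h₃₂b
        · have : b₁ ≤ γ₁₂ (γ₂₃ (γ₃₁ b₁)) :=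
            h₁₂b.trans (m₁₂.monotone (h₂₃b.trans (m₂₃.monotone h₃₁b)))
          exact absurd this (not_le.mpr (hsg₄ b₁ pb₁))
        · have : b₂ ≤ γ₂₃ (γ₃₂ b₂) := h₂₃b.trans (m₂₃.monotone h₃₂b)
          exact absurd this (not_le.mpr (hsg₃ b₂ pb₂))
    · -- b₁ ≤ γ₁₃ b₃
      have pb₃ : 0 < b₃ := by
        rcases eq_or_lt_of_le (zero_le : (0 : ℝ≥0) ≤ b₃) with e | h; · rw [← e, z₁₃] at h₁₃b; simpa using lt_of_lt_of_le pb₁ h₁₃b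
        exact h
      rcases le_max_iff.mp hb₃ with h₃₁b | h₃₂b
      · have : b₁ ≤ γ₁₃ (γ₃₁ b₁) := h₁₃b.trans (m₁₃.monotone h₃₁b)
        exact absurd this (not_le.mpr (hsg₂ b₁ pb₁))
      · have pb₂ : 0 < b₂ := by
          rcases eq_or_lt_of_le (zero_le : (0 : ℝ≥0) ≤ b₂) with e | h; · rw [← e, z₃₂] at h₃₂b; simpa using lt_of_lt_of_le pb₃ h₃₂b
          exact h
        rcases le_max_iff.mp hb₂ with h₂₁b | h₂₃b
        · have : b₁ ≤ γ₁₃ (γ₃₂ (γ₂₁ b₁)) :=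
            h₁₃b.trans (m₁₃.monotone (h₃₂b.trans (m₃₂.monotone h₂₁b)))
          exact absurd this (not_le.mpr (hsg₅ b₁ pb₁))
        · have : b₃ ≤ γ₃₂ (γ₂₃ b₃) := h₃₂b.trans (m₃₂.monotone h₂₃b)
          exact absurd this (not_le.mpr (hsg₃' b₃ pb₃))
  subst hb1
  rw [z₂₁] at hb₂
  rw [z₃₁] at hb₃
  simp only [zero_le, max_eq_right] at hb₂ hb₃
  have hb2 : b₂ = 0 := by
    by_contra h2
    have pb₂ : 0 < b₂ := pos_iff_ne_zero.mpr h2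
    have : b₂ ≤ γ₂₃ (γ₃₂ b₂) := hb₂.trans (m₂₃.monotone hb₃)
    exact absurd this (not_le.mpr (hsg₃ b₂ pb₂))
  subst hb2
  rw [z₃₂] at hb₃
  exact ⟨rfl, rfl, le_antisymm hb₃ zero_le⟩
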